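/- The quantities S_n satisfy the full-history recurrence S_n = 2·S_{n−1} + S_{n−2} + S_{n−3} + … + S_2 + S_1 + 2 for all n ≥ 3, i.e., S_n = 2·S_{n−1} + (Σ_{k=1}^{n−2} S_k) + 2. -/
import Mathlib


/-- `S n` is the number of strings (lists) of length `n` over the alphabet `{0,1,2}`
(modeled as `Fin 3`) in which the pair `12` does not occur consecutively. -/
noncomputable def S (n : ℕ) : ℕ :=
  Nat.card {l : List (Fin 3) // l.length = n ∧ ¬ [1, 2] <:+: l}


def Aset (n : ℕ) : Set (List (Fin 3)) := {l | l.length = n ∧ ¬ [1, 2] <:+: l}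
def Bset (n : ℕ) : Set (List (Fin 3)) :=
  {l | l.length = n ∧ ¬ [1, 2] <:+: l ∧ l.head? ≠ some 2}

example (n : ℕ) : S n = (Aset n).ncard := rfl

lemma Afin (n : ℕ) : (Aset n).Finite :=
  (List.finite_length_eq (Fin 3) n).subset fun _ h => h.1
lemma Bfin (n : ℕ) : (Bset n).Finite :=
  (List.finite_length_eq (Fin 3) n).subset fun _ h => h.1

lemma infix_cons (a : Fin 3) (l : List (Fin 3)) :
    [1, 2] <:+: (a :: l) ↔ (a = 1 ∧ l.head? = some 2) ∨ [1, 2] <:+: l := by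
  rw [List.infix_cons_iff]
  constructor
  · rintro (h | h)
    · rcases h with ⟨t, ht⟩
      cases l with
      | nil => simp at ht
      | cons b l' =>
        simp only [List.cons_append, List.nil_append, List.cons.injEq] at ht
        exact Or.inl ⟨ht.1.symm, by simp [ht.2.1.symm]⟩
    · exact Or.inr h
  · rintro (⟨rfl, h⟩ | h)
    · cases l with
      | nil => simp at h
      | cons b l' =>
        simp at h; subst h
        exact Or.inl ⟨l', rfl⟩
    · exact Or.inr h

lemma Aset_succ (n : ℕ) :
    Aset (n + 1) =
      (List.cons 0 '' Aset n ∪ List.cons 2 '' Aset n) ∪ List.cons 1 '' Bset n := by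
  ext l
  cases l with
  | nil => simp [Aset]
  | cons a t =>
    simp only [Aset, Bset, Set.mem_setOf_eq, Set.mem_union, Set.mem_image,
      List.length_cons, Nat.add_right_cancel_iff, infix_cons, List.cons.injEq]
    fin_cases a <;> simp <;> tauto

lemma Bset_succ (n : ℕ) :
    Bset (n + 1) = List.cons 0 '' Aset n ∪ List.cons 1 '' Bset n := by
  ext l
  cases l with
  | nil => simp [Bset]
  | cons a t =>
    simp only [Aset, Bset, Set.mem_setOf_eq, Set.mem_union, Set.mem_image,
      List.length_cons, Nat.add_right_cancel_iff, infix_cons, List.cons.injEq,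
      List.head?_cons]
    fin_cases a <;> simp <;> tauto

lemma disj_cons (a b : Fin 3) (hab : a ≠ b) (s t : Set (List (Fin 3))) :
    Disjoint (List.cons a '' s) (List.cons b '' t) := by
  rw [Set.disjoint_left]
  rintro l ⟨x, _, rfl⟩ ⟨y, _, h⟩
  exact hab (List.cons.injEq .. ▸ h).1.symm

lemma S_succ (n : ℕ) : S (n + 1) = 2 * S n + (Bset n).ncard := by
  show (Aset (n + 1)).ncard = _
  rw [Aset_succ, Set.ncard_union_eq (by
      rw [Set.disjoint_union_left]
      exact ⟨disj_cons 0 1 (by decide) _ _, disj_cons 2 1 (by decide) _ _⟩)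
      (((Afin n).image _).union ((Afin n).image _)) ((Bfin n).image _),
    Set.ncard_union_eq (disj_cons 0 2 (by decide) _ _) ((Afin n).image _) ((Afin n).image _),
    Set.ncard_image_of_injective _ (List.cons_injective),
    Set.ncard_image_of_injective _ (List.cons_injective),
    Set.ncard_image_of_injective _ (List.cons_injective)]
  show (Aset n).ncard + (Aset n).ncard + _ = 2 * (Aset n).ncard + _
  ring

lemma B_succ (n : ℕ) : (Bset (n + 1)).ncard = S n + (Bset n).ncard := by
  rw [Bset_succ, Set.ncard_union_eq (disj_cons 0 1 (by decide) _ _)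
      ((Afin n).image _) ((Bfin n).image _),
    Set.ncard_image_of_injective _ (List.cons_injective),
    Set.ncard_image_of_injective _ (List.cons_injective)]
  rfl

lemma B_zero : (Bset 0).ncard = 1 := by
  have : Bset 0 = {([] : List (Fin 3))} := by
    ext l; cases l <;> simp [Bset]
  rw [this, Set.ncard_singleton]

lemma S_zero : S 0 = 1 := by
  have : Aset 0 = {([] : List (Fin 3))} := by
    ext l; cases l <;> simp [Aset]
  show (Aset 0).ncard = 1
  rw [this, Set.ncard_singleton]

lemma B_formula (m : ℕ) : (Bset m).ncard = 1 + ∑ k ∈ Finset.range m, S k := by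
  induction m with
  | zero => simp [B_zero]
  | succ m ih => rw [B_succ, ih, Finset.sum_range_succ]; ring

theorem S_full_history_recurrence (n : ℕ) (hn : 3 ≤ n) :
    S n = 2 * S (n - 1) + (∑ k ∈ Finset.Icc 1 (n - 2), S k) + 2 := by
  obtain ⟨m, rfl⟩ : ∃ m, n = m + 2 := ⟨n - 2, by omega⟩
  have h1 : m + 2 - 1 = m + 1 := by omega
  have h2 : m + 2 - 2 = m := by omega
  have hIcc : ∑ k ∈ Finset.Icc 1 m, S k = ∑ k ∈ Finset.range m, S (k + 1) := by
    rw [← Finset.Ico_add_one_right_eq_Icc, Finset.sum_Ico_eq_sum_range]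
    simp [add_comm 1]
  rw [h1, h2, S_succ (m + 1), B_formula, Finset.sum_range_succ', S_zero, hIcc]
  ring
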